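/- Let γ ∈ (0,1), let T ≥ 1 be an integer, and let Z₁, …, Z_T be independent identically distributed random variables with geometric law P(Z = i) = (1−γ) γ^{i−1} for integers i ≥ 1. Then E[ max_{1 ≤ j ≤ T} Z_j / log(1 + Z_j) ] ≤ (4 + 2 log T) / (1 − γ). -/

import Mathlib

open scoped ENNReal
set_option maxHeartbeats 1000000

lemma tsum_pi_prod : ∀ (T : ℕ) (h : Fin T → ℕ → ℝ≥0∞),
    ∑' z : Fin T → ℕ, ∏ j, h j (z j) = ∏ j, ∑' n, h j n := by
  intro T
  induction T with
  | zero =>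
    intro h
    rw [Finset.prod_of_isEmpty]
    have hb : ∀ (b : Fin 0 → ℕ), b ≠ (fun i => i.elim0) → (∏ j, h j (b j)) = 0 := by
      intro b hb; exact absurd (funext fun i => i.elim0) hb
    rw [tsum_eq_single _ hb]
    simp
  | succ T ih =>
    intro h
    rw [← (Fin.consEquiv (fun _ : Fin (T+1) => ℕ)).tsum_eq]
    rw [ENNReal.tsum_prod']
    simp only [Fin.consEquiv_apply]
    have : ∀ (n : ℕ) (z : Fin T → ℕ),
        ∏ j, h j (Fin.cons (α := fun _ => ℕ) n z j) = h 0 n * ∏ j, h j.succ (z j) := by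
      intro n z
      rw [Fin.prod_univ_succ]
      simp
    simp only [this]
    rw [Fin.prod_univ_succ]
    simp only [ENNReal.tsum_mul_left, ih]
    rw [← ENNReal.tsum_mul_right]

lemma geom_summable (γ : ℝ) (hγ0 : 0 < γ) (hγ1 : γ < 1) :
    Summable (fun k : ℕ => (1 - γ) * γ ^ k) :=
  (summable_geometric_of_lt_one hγ0.le hγ1).mul_left _

lemma geomSumOne (γ : ℝ) (hγ0 : 0 < γ) (hγ1 : γ < 1) :
    ∑' k : ℕ, (1 - γ) * γ ^ k = 1 := by
  rw [tsum_mul_left, tsum_geometric_of_lt_one hγ0.le hγ1,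
    mul_inv_cancel₀ (by linarith)]

lemma geom_tail_summable (γ : ℝ) (hγ0 : 0 < γ) (hγ1 : γ < 1) (n : ℕ) :
    Summable (fun k : ℕ => if n ≤ k then (1 - γ) * γ ^ k else 0) := by
  have hnn : ∀ k : ℕ, (0:ℝ) ≤ (1 - γ) * γ ^ k := by
    intro k
    have : (0:ℝ) ≤ 1 - γ := by linarith
    positivity
  apply Summable.of_nonneg_of_le _ _ (geom_summable γ hγ0 hγ1)
  · intro k; split
    · exact hnn k
    · exact le_refl 0
  · intro k; split
    · exact le_refl _
    · exact hnn k

lemma geom_tail (γ : ℝ) (hγ0 : 0 < γ) (hγ1 : γ < 1) (n : ℕ) :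
    ∑' k : ℕ, (if n ≤ k then (1 - γ) * γ ^ k else 0) = γ ^ n := by
  have hs := geom_tail_summable γ hγ0 hγ1 n
  rw [← Summable.sum_add_tsum_nat_add n hs]
  have h1 : ∑ i ∈ Finset.range n, (if n ≤ i then (1 - γ) * γ ^ i else 0) = 0 := by
    apply Finset.sum_eq_zero
    intro i hi
    rw [if_neg (by simp at hi; omega)]
  have h2 : ∀ i : ℕ, (if n ≤ i + n then (1 - γ) * γ ^ (i + n) else 0)
      = ((1 - γ) * γ ^ i) * γ ^ n := by
    intro i
    rw [if_pos (Nat.le_add_left n i), pow_add]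
    ring
  rw [h1, zero_add]
  simp only [h2]
  rw [tsum_mul_right, geomSumOne γ hγ0 hγ1, one_mul]

lemma ind_sum (m : ℕ) :
    ∑' n : ℕ, (if n ≤ m then (1:ℝ≥0∞) else 0) = (m : ℝ≥0∞) + 1 := by
  rw [tsum_eq_sum (s := Finset.range (m+1)) (by intro n hn; rw [if_neg (by simp at hn; omega)])]
  rw [Finset.sum_congr rfl (fun n hn => if_pos (by simp [Finset.mem_range] at hn; omega))]
  simp

theorem stmt_12 (γ : ℝ) (hγ0 : 0 < γ) (hγ1 : γ < 1) (T : ℕ) (hT : 1 ≤ T) :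
    ∑' z : Fin T → ℕ,
        (∏ j, ((1 - γ) * γ ^ (z j))) *
          (Finset.univ.sup' (Finset.univ_nonempty_iff.mpr (Fin.pos_iff_nonempty.mp hT))
            fun j => ((z j : ℝ) + 1) / Real.log ((z j : ℝ) + 2))
      ≤ (4 + 2 * Real.log T) / (1 - γ) := by
  have h1γ : (0:ℝ) < 1 - γ := by linarith
  have hLT : 0 ≤ Real.log T := Real.log_nonneg (by exact_mod_cast hT)
  have hrhs : 0 ≤ (4 + 2 * Real.log T) / (1 - γ) := by positivity
  have hnn : ∀ k : ℕ, (0:ℝ) ≤ (1 - γ) * γ ^ k := by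
    intro k
    have : (0:ℝ) ≤ 1 - γ := by linarith
    positivity
  have hne : (Finset.univ : Finset (Fin T)).Nonempty :=
    Finset.univ_nonempty_iff.mpr (Fin.pos_iff_nonempty.mp hT)
  set h : ℕ → ℝ≥0∞ := fun k => ENNReal.ofReal ((1 - γ) * γ ^ k) with hh
  set P : (Fin T → ℕ) → ℝ≥0∞ := fun z => ∏ j, h (z j) with hPdef
  set M : (Fin T → ℕ) → ℕ := fun z => Finset.univ.sup z with hMdef
  set F : (Fin T → ℕ) → ℝ := fun z =>
    Finset.univ.sup' hne (fun j => ((z j : ℝ) + 1) / Real.log ((z j : ℝ) + 2)) with hFdef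
  -- basic positivity of F
  have hterm_nn : ∀ k : ℕ, 0 ≤ ((k:ℝ) + 1) / Real.log ((k:ℝ) + 2) := by
    intro k
    apply div_nonneg (by positivity)
    apply Real.log_nonneg
    have : (0:ℝ) ≤ (k:ℝ) := Nat.cast_nonneg k
    linarith
  have hFnn : ∀ z, 0 ≤ F z := by
    intro z
    refine le_trans (hterm_nn (z ⟨0, hT⟩)) ?_
    exact Finset.le_sup' (fun j => ((z j : ℝ) + 1) / Real.log ((z j : ℝ) + 2))
      (Finset.mem_univ (⟨0, hT⟩ : Fin T))
  -- pointwise bound F z ≤ 2 (M z + 1)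
  have hFle : ∀ z, F z ≤ 2 * ((M z : ℝ) + 1) := by
    intro z
    apply Finset.sup'_le
    intro j _
    have hlog2 : (1:ℝ)/2 ≤ Real.log ((z j : ℝ) + 2) := by
      have h2 : Real.log 2 ≤ Real.log ((z j : ℝ) + 2) := by
        apply Real.log_le_log (by norm_num)
        have : (0:ℝ) ≤ (z j : ℝ) := Nat.cast_nonneg _
        linarith
      have := Real.log_two_gt_d9
      linarith
    have hzM : (z j : ℝ) ≤ (M z : ℝ) := by
      exact_mod_cast Finset.le_sup (f := z) (Finset.mem_univ j)
    calc ((z j : ℝ) + 1) / Real.log ((z j : ℝ) + 2)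
        ≤ ((z j : ℝ) + 1) / (1/2) :=
          div_le_div_of_nonneg_left (by positivity) (by norm_num) hlog2
      _ = 2 * ((z j : ℝ) + 1) := by ring
      _ ≤ 2 * ((M z : ℝ) + 1) := by linarith
  -- mass computations
  have hsum1 : (∑' k, h k) = 1 := by
    rw [hh]
    rw [← ENNReal.ofReal_tsum_of_nonneg hnn (geom_summable γ hγ0 hγ1),
      geomSumOne γ hγ0 hγ1, ENNReal.ofReal_one]
  have htotal : (∑' z : Fin T → ℕ, P z) = 1 := by
    rw [hPdef]
    rw [tsum_pi_prod T (fun _ => h)]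
    simp [hsum1]
  have htailE : ∀ n : ℕ, (∑' k, h k * (if n ≤ k then (1:ℝ≥0∞) else 0))
      = ENNReal.ofReal (γ ^ n) := by
    intro n
    have hco : ∀ k : ℕ, h k * (if n ≤ k then (1:ℝ≥0∞) else 0)
        = ENNReal.ofReal (if n ≤ k then (1 - γ) * γ ^ k else 0) := by
      intro k
      split <;> simp [hh]
    rw [tsum_congr hco, ← ENNReal.ofReal_tsum_of_nonneg
      (fun k => by split
                   · exact hnn k
                   · exact le_refl 0)
      (geom_tail_summable γ hγ0 hγ1 n), geom_tail γ hγ0 hγ1 n]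
  -- per-coordinate
  have hcoord : ∀ (j : Fin T) (n : ℕ),
      (∑' z : Fin T → ℕ, P z * (if n ≤ z j then (1:ℝ≥0∞) else 0))
        = ENNReal.ofReal (γ ^ n) := by
    intro j n
    have H : Fin T → ℕ → ℝ≥0∞ := fun i k =>
      h k * (if i = j then (if n ≤ k then (1:ℝ≥0∞) else 0) else 1)
    have hrw : ∀ z : Fin T → ℕ, P z * (if n ≤ z j then (1:ℝ≥0∞) else 0)
        = ∏ i, h (z i) * (if i = j then (if n ≤ z i then (1:ℝ≥0∞) else 0) else 1) := by
      intro z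
      rw [Finset.prod_mul_distrib]
      rw [Finset.prod_ite_eq' Finset.univ j (fun i => if n ≤ z i then (1:ℝ≥0∞) else 0)]
      simp [hPdef]
    have hfac : ∀ i : Fin T,
        (∑' k : ℕ, h k * (if i = j then (if n ≤ k then (1:ℝ≥0∞) else 0) else 1))
          = if i = j then ENNReal.ofReal (γ ^ n) else 1 := by
      intro i
      by_cases hij : i = j
      · simp only [if_pos hij]
        exact htailE n
      · simp only [if_neg hij, mul_one]
        exact hsum1
    calc (∑' z : Fin T → ℕ, P z * (if n ≤ z j then (1:ℝ≥0∞) else 0))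
        = ∑' z : Fin T → ℕ, ∏ i, (fun (i : Fin T) (k : ℕ) =>
            h k * (if i = j then (if n ≤ k then (1:ℝ≥0∞) else 0) else 1)) i (z i) :=
          tsum_congr hrw
      _ = ∏ i, ∑' k : ℕ, h k * (if i = j then (if n ≤ k then (1:ℝ≥0∞) else 0) else 1) :=
          tsum_pi_prod T (fun (i : Fin T) (k : ℕ) =>
            h k * (if i = j then (if n ≤ k then (1:ℝ≥0∞) else 0) else 1))
      _ = ∏ i, (if i = j then ENNReal.ofReal (γ ^ n) else 1) :=
          Finset.prod_congr rfl (fun i _ => hfac i)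
      _ = ENNReal.ofReal (γ ^ n) := by
          rw [Finset.prod_ite_eq' Finset.univ j (fun _ => ENNReal.ofReal (γ ^ n))]
          simp
  -- union bound pointwise
  have hunion : ∀ (n : ℕ) (z : Fin T → ℕ),
      (if n ≤ M z then (1:ℝ≥0∞) else 0) ≤ ∑ j, (if n ≤ z j then (1:ℝ≥0∞) else 0) := by
    intro n z
    by_cases hnm : n ≤ M z
    · rw [if_pos hnm]
      obtain ⟨j, _, hj⟩ := Finset.exists_mem_eq_sup Finset.univ hne z
      have hMj : M z = z j := hj
      have hnj : n ≤ z j := by omega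
      calc (1:ℝ≥0∞) = (if n ≤ z j then 1 else 0) := (if_pos hnj).symm
        _ ≤ _ := Finset.single_le_sum (f := fun i => if n ≤ z i then (1:ℝ≥0∞) else 0)
          (fun i _ => zero_le) (Finset.mem_univ j)
    · rw [if_neg hnm]
      exact zero_le
  -- per-n key bound
  have hr : ∀ n : ℕ, 0 ≤ min 1 ((T:ℝ) * γ ^ n) := fun n => le_min zero_le_one (by positivity)
  have hkey : ∀ n : ℕ, (∑' z : Fin T → ℕ, P z * (if n ≤ M z then (1:ℝ≥0∞) else 0))
      ≤ ENNReal.ofReal (min 1 ((T:ℝ) * γ ^ n)) := by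
    intro n
    have hmin : ENNReal.ofReal (min 1 ((T:ℝ) * γ ^ n))
        = min 1 (ENNReal.ofReal ((T:ℝ) * γ ^ n)) := by
      rcases le_total ((T:ℝ) * γ ^ n) 1 with hc | hc
      · rw [min_eq_right hc, min_eq_right (ENNReal.ofReal_le_one.mpr hc)]
      · rw [min_eq_left hc, min_eq_left, ENNReal.ofReal_one]
        rw [← ENNReal.ofReal_one]
        exact ENNReal.ofReal_le_ofReal hc
    rw [hmin]
    refine le_min ?_ ?_
    · calc (∑' z : Fin T → ℕ, P z * (if n ≤ M z then (1:ℝ≥0∞) else 0))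
          ≤ ∑' z : Fin T → ℕ, P z := ENNReal.tsum_le_tsum (fun z => by
            calc P z * (if n ≤ M z then (1:ℝ≥0∞) else 0)
                ≤ P z * 1 := mul_le_mul_right (by split <;> simp) _
              _ = P z := mul_one _)
        _ = 1 := htotal
    · calc (∑' z : Fin T → ℕ, P z * (if n ≤ M z then (1:ℝ≥0∞) else 0))
          ≤ ∑' z : Fin T → ℕ, P z * ∑ j, (if n ≤ z j then (1:ℝ≥0∞) else 0) :=
            ENNReal.tsum_le_tsum (fun z => mul_le_mul_right (hunion n z) _)
        _ = ∑' z : Fin T → ℕ, ∑ j, P z * (if n ≤ z j then (1:ℝ≥0∞) else 0) :=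
            tsum_congr (fun z => Finset.mul_sum _ _ _)
        _ = ∑ j, ∑' z : Fin T → ℕ, P z * (if n ≤ z j then (1:ℝ≥0∞) else 0) :=
            Summable.tsum_finsetSum (fun j _ => ENNReal.summable)
        _ = ∑ _j : Fin T, ENNReal.ofReal (γ ^ n) :=
            Finset.sum_congr rfl (fun j _ => hcoord j n)
        _ = (T:ℝ≥0∞) * ENNReal.ofReal (γ ^ n) := by
            rw [Finset.sum_const]
            simp [nsmul_eq_mul]
        _ = ENNReal.ofReal ((T:ℝ) * γ ^ n) := by
            rw [ENNReal.ofReal_mul (Nat.cast_nonneg T), ENNReal.ofReal_natCast]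
  -- real tail estimates
  have hrsummable : Summable (fun n : ℕ => min 1 ((T:ℝ) * γ ^ n)) :=
    Summable.of_nonneg_of_le hr (fun n => min_le_right _ _)
      ((summable_geometric_of_lt_one hγ0.le hγ1).mul_left _)
  set n₀ : ℕ := ⌈Real.log T / (1 - γ)⌉₊ with hn0
  have hn0ge : Real.log T / (1 - γ) ≤ (n₀:ℝ) := Nat.le_ceil _
  have hn0lt : (n₀:ℝ) < Real.log T / (1 - γ) + 1 := Nat.ceil_lt_add_one (by positivity)
  have hTpos : (0:ℝ) < (T:ℝ) := by exact_mod_cast Nat.lt_of_lt_of_le Nat.zero_lt_one hT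
  have hTγ : (T:ℝ) * γ ^ n₀ ≤ 1 := by
    have hlogγ : Real.log γ ≤ γ - 1 := Real.log_le_sub_one_of_pos hγ0
    have h1 : Real.log T ≤ (n₀:ℝ) * (1 - γ) := by
      rw [div_le_iff₀ h1γ] at hn0ge; linarith
    have h2 : (n₀:ℝ) * (1-γ) ≤ (n₀:ℝ) * (-Real.log γ) :=
      mul_le_mul_of_nonneg_left (by linarith) (Nat.cast_nonneg n₀)
    have hpow : γ ^ n₀ = Real.exp ((n₀:ℝ) * Real.log γ) := by
      rw [Real.exp_nat_mul, Real.exp_log hγ0]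
    have hexp : Real.exp ((n₀:ℝ) * Real.log γ) ≤ Real.exp (- Real.log T) := by
      apply Real.exp_le_exp.mpr
      nlinarith
    rw [Real.exp_neg, Real.exp_log hTpos] at hexp
    calc (T:ℝ) * γ ^ n₀ = (T:ℝ) * Real.exp ((n₀:ℝ) * Real.log γ) := by rw [hpow]
      _ ≤ (T:ℝ) * ((T:ℝ))⁻¹ := mul_le_mul_of_nonneg_left hexp hTpos.le
      _ = 1 := mul_inv_cancel₀ hTpos.ne'
  have htail : (∑' n : ℕ, min 1 ((T:ℝ) * γ ^ n)) ≤ (n₀:ℝ) + 1/(1-γ) := by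
    rw [← Summable.sum_add_tsum_nat_add n₀ hrsummable]
    have hA : (∑ i ∈ Finset.range n₀, min 1 ((T:ℝ) * γ ^ i)) ≤ (n₀:ℝ) := by
      calc (∑ i ∈ Finset.range n₀, min 1 ((T:ℝ) * γ ^ i))
          ≤ ∑ _i ∈ Finset.range n₀, (1:ℝ) :=
            Finset.sum_le_sum (fun i _ => min_le_left _ _)
        _ = (n₀:ℝ) := by simp
    have hB : (∑' k : ℕ, min 1 ((T:ℝ) * γ ^ (k + n₀))) ≤ 1/(1-γ) := by
      have hBle : ∀ k : ℕ, min 1 ((T:ℝ) * γ ^ (k + n₀)) ≤ ((T:ℝ) * γ ^ n₀) * γ ^ k := by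
        intro k
        calc min 1 ((T:ℝ) * γ ^ (k + n₀)) ≤ (T:ℝ) * γ ^ (k + n₀) := min_le_right _ _
          _ = ((T:ℝ) * γ ^ n₀) * γ ^ k := by rw [pow_add]; ring
      calc (∑' k : ℕ, min 1 ((T:ℝ) * γ ^ (k + n₀)))
          ≤ ∑' k : ℕ, ((T:ℝ) * γ ^ n₀) * γ ^ k :=
            Summable.tsum_le_tsum hBle ((summable_nat_add_iff n₀).mpr hrsummable)
              ((summable_geometric_of_lt_one hγ0.le hγ1).mul_left _)
        _ = ((T:ℝ) * γ ^ n₀) * (1-γ)⁻¹ := by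
            rw [tsum_mul_left, tsum_geometric_of_lt_one hγ0.le hγ1]
        _ ≤ 1 * (1-γ)⁻¹ := mul_le_mul_of_nonneg_right hTγ (by positivity)
        _ = 1/(1-γ) := by rw [one_mul, one_div]
    linarith
  -- main ENNReal chain
  have hchain : (∑' z : Fin T → ℕ, P z * ENNReal.ofReal (F z))
      ≤ ENNReal.ofReal ((4 + 2 * Real.log T) / (1 - γ)) := by
    calc (∑' z : Fin T → ℕ, P z * ENNReal.ofReal (F z))
        ≤ ∑' z : Fin T → ℕ, P z * (2 * ((M z : ℝ≥0∞) + 1)) :=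
          ENNReal.tsum_le_tsum (fun z => by
            apply mul_le_mul_right
            calc ENNReal.ofReal (F z) ≤ ENNReal.ofReal (2 * ((M z : ℝ) + 1)) :=
                ENNReal.ofReal_le_ofReal (hFle z)
              _ = 2 * ((M z : ℝ≥0∞) + 1) := by
                rw [ENNReal.ofReal_mul (by norm_num),
                  ENNReal.ofReal_add (Nat.cast_nonneg _) zero_le_one]
                norm_num)
      _ = 2 * ∑' z : Fin T → ℕ, P z * ((M z : ℝ≥0∞) + 1) := by
          rw [← ENNReal.tsum_mul_left]
          exact tsum_congr (fun z => by ring)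
      _ = 2 * ∑' z : Fin T → ℕ, ∑' n : ℕ, P z * (if n ≤ M z then (1:ℝ≥0∞) else 0) := by
          congr 1
          exact tsum_congr (fun z => by rw [ENNReal.tsum_mul_left, ind_sum (M z)])
      _ = 2 * ∑' n : ℕ, ∑' z : Fin T → ℕ, P z * (if n ≤ M z then (1:ℝ≥0∞) else 0) := by
          rw [ENNReal.tsum_comm]
      _ ≤ 2 * ∑' n : ℕ, ENNReal.ofReal (min 1 ((T:ℝ) * γ ^ n)) :=
          mul_le_mul_right (ENNReal.tsum_le_tsum hkey) 2
      _ = 2 * ENNReal.ofReal (∑' n : ℕ, min 1 ((T:ℝ) * γ ^ n)) := by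
          rw [ENNReal.ofReal_tsum_of_nonneg hr hrsummable]
      _ ≤ 2 * ENNReal.ofReal ((n₀:ℝ) + 1/(1-γ)) :=
          mul_le_mul_right (ENNReal.ofReal_le_ofReal htail) 2
      _ = ENNReal.ofReal (2 * ((n₀:ℝ) + 1/(1-γ))) := by
          rw [ENNReal.ofReal_mul (by norm_num : (0:ℝ) ≤ 2)]
          norm_num
      _ ≤ ENNReal.ofReal ((4 + 2 * Real.log T) / (1 - γ)) := by
          apply ENNReal.ofReal_le_ofReal
          rw [le_div_iff₀ h1γ]
          have hmul : ((n₀:ℝ)) * (1-γ) ≤ Real.log T + (1-γ) := by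
            have := mul_le_mul_of_nonneg_right hn0lt.le h1γ.le
            rwa [add_mul, div_mul_cancel₀ _ h1γ.ne', one_mul] at this
          have hexpand : 2*((n₀:ℝ) + 1/(1-γ))*(1-γ) = 2*((n₀:ℝ)*(1-γ)) + 2 := by
            field_simp
          rw [hexpand]
          linarith [hmul, hγ0]
  -- transfer back to ℝ
  show (∑' z : Fin T → ℕ, (∏ j, ((1 - γ) * γ ^ (z j))) * F z)
      ≤ (4 + 2 * Real.log T) / (1 - γ)
  have hann : ∀ z : Fin T → ℕ, 0 ≤ (∏ j, ((1 - γ) * γ ^ (z j))) * F z :=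
    fun z => mul_nonneg (Finset.prod_nonneg (fun j _ => hnn (z j))) (hFnn z)
  have hofa : ∀ z : Fin T → ℕ,
      ENNReal.ofReal ((∏ j, ((1 - γ) * γ ^ (z j))) * F z) = P z * ENNReal.ofReal (F z) := by
    intro z
    rw [ENNReal.ofReal_mul (Finset.prod_nonneg (fun j _ => hnn (z j)))]
    congr 1
    rw [ENNReal.ofReal_prod_of_nonneg (fun j _ => hnn (z j))]
  by_cases hsummable : Summable (fun z : Fin T → ℕ => (∏ j, ((1 - γ) * γ ^ (z j))) * F z)
  · apply (ENNReal.ofReal_le_ofReal_iff hrhs).mp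
    rw [ENNReal.ofReal_tsum_of_nonneg hann hsummable]
    calc (∑' z : Fin T → ℕ, ENNReal.ofReal ((∏ j, ((1 - γ) * γ ^ (z j))) * F z))
        = ∑' z : Fin T → ℕ, P z * ENNReal.ofReal (F z) := tsum_congr hofa
      _ ≤ ENNReal.ofReal ((4 + 2 * Real.log T) / (1 - γ)) := hchain
  · rw [tsum_eq_zero_of_not_summable hsummable]
    exact hrhs
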